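/- A finitely generated monoid M is finite if and only if its loop problem L_σ(M) with respect to some (equivalently, any) finite choice of generators σ : X* → M is a regular language. -/

import Mathlib

open FreeMonoid

section LoopPrelude

variable {X M : Type*} [Monoid M]

def barW {X : Type*} (w : List (X ⊕ X)) : List (X ⊕ X) := (w.map Sum.swap).reverse

def posW {X : Type*} (u : List X) : List (X ⊕ X) := u.map Sum.inl

def negW {X : Type*} (v : List X) : List (X ⊕ X) := (v.map Sum.inr).reverse

inductive LStep (σ : FreeMonoid X →* M) : M → (X ⊕ X) → M → Prop
  | posW (a : M) (x : X) : LStep σ a (Sum.inl x) (a * σ (of x))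
  | negW (a : M) (x : X) : LStep σ (a * σ (of x)) (Sum.inr x) a

inductive LPath (σ : FreeMonoid X →* M) : M → List (X ⊕ X) → M → Prop
  | nil (a : M) : LPath σ a [] a
  | cons {a b c : M} {l : X ⊕ X} {w : List (X ⊕ X)}
      (h₁ : LStep σ a l b) (h₂ : LPath σ b w c) : LPath σ a (l :: w) c

def LoopProblem (σ : FreeMonoid X →* M) : Set (List (X ⊕ X)) := { w | LPath σ 1 w 1 }

end LoopPrelude

section SemiPrelude

variable {X S : Type*} [Semigroup S]

def SLoopProblem (f : X → S) : Set (List (X ⊕ X)) :=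
  LoopProblem (FreeMonoid.lift (fun x => (f x : WithOne S)))

end SemiPrelude

section Aux

variable {X M : Type*} [Monoid M] {σ : FreeMonoid X →* M}

theorem lpath_append {a c : M} {w₁ w₂ : List (X ⊕ X)} :
    LPath σ a (w₁ ++ w₂) c ↔ ∃ b, LPath σ a w₁ b ∧ LPath σ b w₂ c := by
  induction w₁ generalizing a with
  | nil =>
    simp only [List.nil_append]
    constructor
    · exact fun h => ⟨a, LPath.nil a, h⟩
    · rintro ⟨b, hb, h⟩; cases hb; exact h
  | cons l w ih =>
    constructor
    · rintro (_ | ⟨h₁, h₂⟩)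
      · rcases ih.mp h₂ with ⟨b, hb₁, hb₂⟩
        exact ⟨b, LPath.cons h₁ hb₁, hb₂⟩
    · rintro ⟨b, (_ | ⟨h₁, h₂⟩), h⟩
      exact LPath.cons h₁ (ih.mpr ⟨b, h₂, h⟩)

theorem lpath_pos {a b : M} {u : List X} :
    LPath σ a (posW u) b ↔ b = a * σ (ofList u) := by
  induction u generalizing a with
  | nil =>
    constructor
    · rintro (_ | _); simp
    · rintro rfl
      simpa [posW] using LPath.nil a
  | cons x u ih =>
    constructor
    · rintro (_ | ⟨h₁, h₂⟩)
      cases h₁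
      rw [ih.mp h₂]
      simp [ofList_cons, mul_assoc]
    · rintro rfl
      refine LPath.cons (LStep.posW a x) (?_ : LPath σ _ (posW u) _)
      rw [ih]
      simp [ofList_cons, mul_assoc]

theorem lpath_single_neg {a b : M} {x : X} :
    LPath σ a [Sum.inr x] b ↔ a = b * σ (of x) := by
  constructor
  · rintro (_ | ⟨h₁, h₂⟩)
    cases h₁
    cases h₂
    rfl
  · rintro rfl
    exact LPath.cons (LStep.negW b x) (LPath.nil b)

theorem lpath_neg {a b : M} {v : List X} :
    LPath σ a (negW v) b ↔ a = b * σ (ofList v) := by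
  induction v generalizing b with
  | nil =>
    constructor
    · rintro (_ | _); simp
    · rintro rfl
      simpa [negW] using LPath.nil b
  | cons x v ih =>
    have hsplit : negW (x :: v) = negW v ++ [Sum.inr x] := by
      simp [negW]
    rw [hsplit, lpath_append]
    constructor
    · rintro ⟨c, hc₁, hc₂⟩
      rw [ih.mp hc₁, lpath_single_neg.mp hc₂]
      simp [ofList_cons, mul_assoc]
    · rintro rfl
      refine ⟨b * σ (of x), ih.mpr ?_, lpath_single_neg.mpr rfl⟩
      simp [ofList_cons, mul_assoc]

end Aux

theorem finite_iff_loop_problem_regular {X M : Type*} [Finite X] [Monoid M]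
    (σ : FreeMonoid X →* M) (hσ : Function.Surjective σ) :
    Finite M ↔ Language.IsRegular (LoopProblem σ : Language (X ⊕ X)) := by
  classical
  constructor
  · intro hM
    -- build an NFA on states M
    let N : NFA (X ⊕ X) M :=
      { step := fun a l => {b | LStep σ a l b}
        start := {1}
        accept := {1} }
    have hEval : ∀ (w : List (X ⊕ X)) (S : Set M) (b : M),
        b ∈ N.evalFrom S w ↔ ∃ a ∈ S, LPath σ a w b := by
      intro w
      induction w with
      | nil =>
        intro S b
        constructor
        · exact fun h => ⟨b, h, LPath.nil b⟩
        · rintro ⟨a, ha, hp⟩; cases hp; exact ha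
      | cons l w ih =>
        intro S b
        have : N.evalFrom S (l :: w) = N.evalFrom (N.stepSet S l) w := rfl
        rw [this, ih]
        constructor
        · rintro ⟨c, hc, hp⟩
          rw [NFA.mem_stepSet] at hc
          rcases hc with ⟨a, ha, hs⟩
          exact ⟨a, ha, LPath.cons hs hp⟩
        · rintro ⟨a, ha, (_ | ⟨h₁, h₂⟩)⟩
          exact ⟨_, NFA.mem_stepSet.mpr ⟨a, ha, h₁⟩, h₂⟩
    have haccepts : N.accepts = (LoopProblem σ : Language (X ⊕ X)) := by
      ext w
      rw [NFA.mem_accepts]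
      constructor
      · rintro ⟨s, hs, hmem⟩
        rcases (hEval w N.start s).mp hmem with ⟨a, ha, hp⟩
        change s = 1 at hs; change a = 1 at ha
        subst hs; subst ha
        exact hp
      · intro hw
        exact ⟨1, rfl, (hEval w N.start 1).mpr ⟨1, rfl, hw⟩⟩
    have : Fintype M := Fintype.ofFinite M
    have : Fintype (Set M) := Fintype.ofFinite _
    let e : Set M ≃ Fin (Fintype.card (Set M)) := Fintype.equivFin (Set M)
    refine ⟨Fin (Fintype.card (Set M)), inferInstance, DFA.reindex e N.toDFA, ?_⟩
    rw [DFA.accepts_reindex, NFA.toDFA_correct, haccepts]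
  · rintro ⟨Q, hQ, A, hA⟩
    -- choose representative words
    choose rep hrep using hσ
    let f : M → Q := fun m => A.evalFrom A.start (posW (toList (rep m)))
    have hloop : ∀ m : M, (posW (toList (rep m)) ++ negW (toList (rep m))) ∈ LoopProblem σ := by
      intro m
      refine lpath_append.mpr ⟨m, ?_, ?_⟩
      · exact lpath_pos.mpr (by simp [hrep m])
      · exact lpath_neg.mpr (by simp [hrep m])
    have hinj : Function.Injective f := by
      intro m m' hf
      have h1 : (posW (toList (rep m)) ++ negW (toList (rep m))) ∈ A.accepts := by
        rw [hA]; exact hloop m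
      have h2 : (posW (toList (rep m')) ++ negW (toList (rep m))) ∈ A.accepts := by
        rw [DFA.mem_accepts, DFA.eval, DFA.evalFrom_of_append] at h1 ⊢
        have key : A.evalFrom (f m) (negW (toList (rep m))) ∈ A.accept := h1
        rw [hf] at key
        exact key
      rw [hA] at h2
      rcases lpath_append.mp h2 with ⟨c, hc₁, hc₂⟩
      have e1 : c = m' := by simpa [hrep m'] using lpath_pos.mp hc₁
      have e2 : c = m := by simpa [hrep m] using lpath_neg.mp hc₂
      rw [← e1, e2]
    exact Finite.of_injective f hinj
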